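/- arXiv:1404.4829 — 5 statements merged into one kernel-verified Lean document; each statement's English description precedes it below -/
import Mathlib

section
/- Let f : ℝ≥0 → ℝ≥0 be continuous with f(0) = 0, compact support, and sup f ≥ h > 0. Let t be a time such that p_f(t) lies in the h-trimming Tr^h(T_f) of the tree coded by f. Then there exists s ≥ 0 such that inf over [min(s,t), max(s,t)] of f equals f(t) and f(s) − f(t) ≥ h; conversely, if such s exists then p_f(t) ∈ Tr^h(T_f). -/
open Set Filter
open scoped NNReal Topology

/-- The pseudo-distance `d_f(s,t) = f s + f t − 2 inf_{[s∧t, s∨t]} f` on times; the real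
tree `T_f` coded by `f` is the quotient of `ℝ≥0` by `d_f = 0`, with projection `p_f` and
root `p_f 0`. -/
noncomputable def treeDist (f : ℝ≥0 → ℝ) (s t : ℝ≥0) : ℝ :=
  f s + f t - 2 * sInf (f '' Set.Icc (min s t) (max s t))

/-- `ancT f a b` means `p_f a ⪯ p_f b` in the tree coded by `f`, i.e.
`inf_{[a∧b, a∨b]} f = f a`. -/
def ancT (f : ℝ≥0 → ℝ) (a b : ℝ≥0) : Prop :=
  sInf (f '' Set.Icc (min a b) (max a b)) = f a

/-- `p_f t` belongs to the `h`-trimming `Tr^h(T_f)`, i.e.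
`sup { d_f(p_f t, y) : y ⪰ p_f t } ≥ h`. -/
def TrimTime (h : ℝ) (f : ℝ≥0 → ℝ) (t : ℝ≥0) : Prop :=
  h ≤ sSup ((fun s => treeDist f t s) '' {s | ancT f t s})

lemma ancT_self (f : ℝ≥0 → ℝ) (t : ℝ≥0) : ancT f t t := by
  simp [ancT, Set.Icc_self]

lemma sInf_image_bddBelow (f : ℝ≥0 → ℝ) (hpos : ∀ u, 0 ≤ f u) (a b : ℝ≥0) :
    BddBelow (f '' Set.Icc a b) := by
  refine ⟨0, ?_⟩; rintro x ⟨u, _, rfl⟩; exact hpos u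

lemma sInf_image_le_ft (f : ℝ≥0 → ℝ) (hpos : ∀ u, 0 ≤ f u) (t s : ℝ≥0) :
    sInf (f '' Set.Icc (min t s) (max t s)) ≤ f t :=
  csInf_le (sInf_image_bddBelow f hpos _ _)
    ⟨t, ⟨min_le_left _ _, le_max_left _ _⟩, rfl⟩

lemma treeDist_eq_of_anc (f : ℝ≥0 → ℝ) {t s : ℝ≥0} (hanc : ancT f t s) :
    treeDist f t s = f s - f t := by
  unfold treeDist
  rw [hanc]; ring

lemma ancT_isClosed (f : ℝ≥0 → ℝ) (hf : Continuous f) (hpos : ∀ u, 0 ≤ f u) (t : ℝ≥0) :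
    IsClosed {s | ancT f t s} := by
  apply IsSeqClosed.isClosed
  intro u p hu hlim
  refine le_antisymm (sInf_image_le_ft f hpos t p) ?_
  refine le_csInf ⟨f t, t, ⟨min_le_left _ _, le_max_left _ _⟩, rfl⟩ ?_
  rintro x ⟨v, hv, rfl⟩
  -- clamp v into the n-th interval
  set w : ℕ → ℝ≥0 := fun n => min (max v (min t (u n))) (max t (u n)) with hw
  have hwmem : ∀ n, w n ∈ Set.Icc (min t (u n)) (max t (u n)) := by
    intro n
    constructor
    · exact le_min (le_max_right _ _) min_le_max
    · exact min_le_right _ _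
  have hbound : ∀ n, f t ≤ f (w n) := by
    intro n
    have := csInf_le (sInf_image_bddBelow f hpos _ _)
      (Set.mem_image_of_mem f (hwmem n))
    rw [hu n] at this
    exact this
  have hwlim : Tendsto w atTop (𝓝 v) := by
    have h1 : Tendsto (fun n => min t (u n)) atTop (𝓝 (min t p)) :=
      tendsto_const_nhds.min hlim
    have h2 : Tendsto (fun n => max t (u n)) atTop (𝓝 (max t p)) :=
      tendsto_const_nhds.max hlim
    have h3 : Tendsto w atTop (𝓝 (min (max v (min t p)) (max t p))) :=
      (tendsto_const_nhds.max h1).min h2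
    rwa [max_eq_left hv.1, min_eq_left hv.2] at h3
  exact ge_of_tendsto' ((hf.tendsto v).comp hwlim) hbound

/-- **Characterization of membership in the `h`-trimming**: `p_f t ∈ Tr^h(T_f)` if and only
if `t` is a starting or ending time of a sub-excursion of `f` of height at least `h` from
level `f t`, i.e. iff there is `s` with `inf_{[s∧t, s∨t]} f = f t` and `f s − f t ≥ h`. -/
theorem trimTime_iff_subexcursion
    (h : ℝ) (hh : 0 < h) (f : ℝ≥0 → ℝ) (hf : Continuous f)
    (hpos : ∀ u, 0 ≤ f u) (hf0 : f 0 = 0) (K : ℝ≥0) (hK : ∀ u, K ≤ u → f u = 0)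
    (hsup : h ≤ sSup (Set.range f)) (t : ℝ≥0) :
    TrimTime h f t ↔ ∃ s, ancT f t s ∧ h ≤ f s - f t := by
  -- a global bound on f
  obtain ⟨u0, hu0mem, hu0⟩ :=
    isCompact_Icc.exists_isMaxOn (⟨0, le_refl 0, zero_le⟩ : (Set.Icc 0 K).Nonempty)
      hf.continuousOn
  have hM : ∀ u, f u ≤ f u0 := by
    intro u
    by_cases hu : u ≤ K
    · exact hu0 ⟨zero_le, hu⟩
    · rw [hK u (le_of_not_ge hu)]; exact hpos u0
  set S := (fun s => treeDist f t s) '' {s | ancT f t s} with hS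
  have hSne : S.Nonempty := ⟨treeDist f t t, Set.mem_image_of_mem _ (ancT_self f t)⟩
  have hSbdd : BddAbove S := by
    refine ⟨f u0 - f t, ?_⟩
    rintro x ⟨s, hs, rfl⟩
    show treeDist f t s ≤ _
    rw [treeDist_eq_of_anc f hs]
    have := hM s
    linarith
  constructor
  · intro htrim
    -- find a maximizer of f on ancestors-compatible times in a compact window
    set K' := max K t with hK'
    set A := {s | ancT f t s} ∩ Set.Icc 0 K' with hA
    have hAcomp : IsCompact A := isCompact_Icc.inter_left (ancT_isClosed f hf hpos t)
    have htA : t ∈ A := ⟨ancT_self f t, zero_le, le_max_right _ _⟩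
    obtain ⟨s0, hs0A, hs0max⟩ := hAcomp.exists_isMaxOn ⟨t, htA⟩ hf.continuousOn
    have hft : f t ≤ f s0 := hs0max htA
    have hsup_le : sSup S ≤ f s0 - f t := by
      refine csSup_le hSne ?_
      rintro x ⟨s, hs, rfl⟩
      show treeDist f t s ≤ _
      rw [treeDist_eq_of_anc f hs]
      by_cases hsK : s ≤ K'
      · have : f s ≤ f s0 := hs0max ⟨hs, zero_le, hsK⟩
        linarith
      · have : f s = 0 := hK s (le_trans (le_max_left _ _) (le_of_not_ge hsK))
        have := hpos t
        linarith [hK s (le_trans (le_max_left _ _) (le_of_not_ge hsK))]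
    exact ⟨s0, hs0A.1, le_trans htrim hsup_le⟩
  · rintro ⟨s, hanc, hhs⟩
    have hmem : treeDist f t s ∈ S := Set.mem_image_of_mem _ hanc
    have : h ≤ treeDist f t s := by rw [treeDist_eq_of_anc f hanc]; exact hhs
    exact le_trans this (le_csSup hSbdd hmem)
end

section
/- Let f : ℝ≥0 → ℝ≥0 be continuous with f(0) = 0 and let t₁, t₂ ≥ 0. For any s at which f attains its minimum over [min(t₁,t₂), max(t₁,t₂)], the point p_f(s) is the most recent common ancestor of p_f(t₁) and p_f(t₂) in the real tree T_f, and its distance to the root equals min over [min(t₁,t₂), max(t₁,t₂)] of f. -/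
open Set
open scoped NNReal

/-- **Most recent common ancestors in a coded tree** (equation (1) of the paper): if `f`
attains its minimum over `[t₁∧t₂, t₁∨t₂]` at `s`, then `p_f s` is the most recent common
ancestor of `p_f t₁` and `p_f t₂` in the tree `T_f`, and its distance to the root equals
`min_{[t₁∧t₂, t₁∨t₂]} f`. -/
theorem argmin_is_mrca
    (f : ℝ≥0 → ℝ) (hf : Continuous f) (hpos : ∀ u, 0 ≤ f u) (hf0 : f 0 = 0)
    (t₁ t₂ s : ℝ≥0) (hs : s ∈ Set.Icc (min t₁ t₂) (max t₁ t₂))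
    (hmin : f s = sInf (f '' Set.Icc (min t₁ t₂) (max t₁ t₂))) :
    (ancT f s t₁ ∧ ancT f s t₂ ∧ ∀ u, ancT f u t₁ → ancT f u t₂ → ancT f u s) ∧
    treeDist f 0 s = sInf (f '' Set.Icc (min t₁ t₂) (max t₁ t₂)) := by
  obtain ⟨hsa, hsb⟩ := hs
  have hbdd : ∀ c d : ℝ≥0, BddBelow (f '' Set.Icc c d) := by
    intro c d
    refine ⟨0, ?_⟩
    rintro x ⟨u, -, rfl⟩
    exact hpos u
  have hinf_le : ∀ (c d u : ℝ≥0), u ∈ Set.Icc c d → sInf (f '' Set.Icc c d) ≤ f u :=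
    fun c d u hu => csInf_le (hbdd c d) ⟨u, hu, rfl⟩
  -- an auxiliary lemma: if `[min s t, max s t] ⊆ [min t₁ t₂, max t₁ t₂]` then `ancT f s t`
  have anc_of_subset : ∀ t : ℝ≥0,
      Set.Icc (min s t) (max s t) ⊆ Set.Icc (min t₁ t₂) (max t₁ t₂) → ancT f s t := by
    intro t hsub
    have hsmem : s ∈ Set.Icc (min s t) (max s t) := ⟨min_le_left _ _, le_max_left _ _⟩
    refine le_antisymm (hinf_le _ _ s hsmem) ?_
    refine le_csInf ⟨f s, s, hsmem, rfl⟩ ?_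
    rintro x ⟨w, hw, rfl⟩
    calc f s = sInf (f '' Set.Icc (min t₁ t₂) (max t₁ t₂)) := hmin
    _ ≤ f w := hinf_le _ _ w (hsub hw)
  have anc1 : ancT f s t₁ := by
    refine anc_of_subset t₁ ?_
    refine Set.Icc_subset_Icc (le_min hsa (min_le_left _ _)) (max_le hsb (le_max_left _ _))
  have anc2 : ancT f s t₂ := by
    refine anc_of_subset t₂ ?_
    refine Set.Icc_subset_Icc (le_min hsa (min_le_right _ _)) (max_le hsb (le_max_right _ _))
  refine ⟨⟨anc1, anc2, ?_⟩, ?_⟩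
  · intro u h1 h2
    have humem : u ∈ Set.Icc (min u s) (max u s) := ⟨min_le_left _ _, le_max_left _ _⟩
    refine le_antisymm (hinf_le _ _ u humem) ?_
    refine le_csInf ⟨f u, u, humem, rfl⟩ ?_
    rintro x ⟨w, hw, rfl⟩
    have haux : ∀ t : ℝ≥0, ancT f u t → w ∈ Set.Icc (min u t) (max u t) → f u ≤ f w := by
      intro t h hwt
      calc f u = sInf (f '' Set.Icc (min u t) (max u t)) := h.symm
      _ ≤ f w := hinf_le _ _ w hwt
    obtain ⟨hw1, hw2⟩ := hw
    rcases le_total u s with hus | hsu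
    · -- `w ∈ [u, s]` and `s ≤ max t₁ t₂`
      rw [min_eq_left hus] at hw1
      rw [max_eq_right hus] at hw2
      rcases le_total t₁ t₂ with h12 | h21
      · refine haux t₂ h2 ⟨le_trans (min_le_left _ _) hw1,
          le_trans (hw2.trans (hsb.trans_eq (max_eq_right h12))) (le_max_right _ _)⟩
      · refine haux t₁ h1 ⟨le_trans (min_le_left _ _) hw1,
          le_trans (hw2.trans (hsb.trans_eq (max_eq_left h21))) (le_max_right _ _)⟩
    · -- `w ∈ [s, u]` and `min t₁ t₂ ≤ s`
      rw [min_eq_right hsu] at hw1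
      rw [max_eq_left hsu] at hw2
      rcases le_total t₁ t₂ with h12 | h21
      · refine haux t₁ h1 ⟨le_trans (min_le_right _ _)
          (((min_eq_left h12) ▸ hsa).trans hw1), le_trans hw2 (le_max_left _ _)⟩
      · refine haux t₂ h2 ⟨le_trans (min_le_right _ _)
          (((min_eq_right h21) ▸ hsa).trans hw1), le_trans hw2 (le_max_left _ _)⟩
  · -- distance to the root
    have h0 : sInf (f '' Set.Icc (min 0 s) (max 0 s)) = 0 := by
      refine le_antisymm ?_ ?_
      · have : (0 : ℝ≥0) ∈ Set.Icc (min 0 s) (max 0 s) :=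
          ⟨min_le_left _ _, le_trans (zero_le : (0 : ℝ≥0) ≤ s) (le_max_right _ _)⟩
        calc sInf (f '' Set.Icc (min 0 s) (max 0 s)) ≤ f 0 := hinf_le _ _ 0 this
        _ = 0 := hf0
      · refine le_csInf ⟨f 0, 0, ⟨min_le_left _ _, le_trans (zero_le : (0 : ℝ≥0) ≤ s) (le_max_right _ _)⟩, rfl⟩ ?_
        rintro x ⟨u, -, rfl⟩
        exact hpos u
    simp only [treeDist, h0, hf0, hmin]
    ring
end

section
/- Let h > 0 and f : ℝ≥0 → ℝ continuous with f(0) = 0, and suppose t_n < ∞ (the n-th returning time of Λ_{0,h}(f) to 0). Then the total variation of the h-cut f_h on [0, t_n] equals Σ_{k=1}^{n} (f_h(t_{k−1}) − f_h(s_k)) + (f_h(t_k) − f_h(s_k)), each summand being non-negative; equivalently TV(f_h, [0,t_n]) = Σ_k (Y_k + X_k) where X_k = f_h(t_k) − f_h(s_k) and Y_k = f_h(t_{k−1}) − f_h(s_k). -/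
open Set
open scoped NNReal ENNReal

/-- Solution data for the two-sided Skorohod reflection problem of `f` on `[0,h]`:
`c0` and `ch` are the compensators at `0` and at `h`,
and `fun t => f t + ch t + c0 t` is the reflected path `Λ_{0,h}(f)`.
The support conditions on the measures `dc⁰` and `d(−cʰ)` are phrased as:
the compensator is constant on every (closed) interval on which the reflected
path avoids the corresponding boundary. -/
structure SkorohodPair (h : ℝ) (f c0 ch : ℝ≥0 → ℝ) : Prop where
  cont0 : Continuous c0
  conth : Continuous ch
  init0 : c0 0 = 0
  inith : ch 0 = 0
  mem_Icc : ∀ t, f t + ch t + c0 t ∈ Set.Icc (0 : ℝ) h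
  mono0 : Monotone c0
  antih : Antitone ch
  flat0 : ∀ a b : ℝ≥0, a ≤ b → (∀ t ∈ Set.Icc a b, f t + ch t + c0 t ≠ 0) → c0 b = c0 a
  flath : ∀ a b : ℝ≥0, a ≤ b → (∀ t ∈ Set.Icc a b, f t + ch t + c0 t ≠ h) → ch b = ch a

/-- `eInf S` : infimum of a set of times, in `ℝ≥0∞`, with the convention `inf ∅ = ∞`. -/
noncomputable def eInf (S : Set ℝ≥0) : ℝ≥0∞ := sInf ((fun x : ℝ≥0 => (x : ℝ≥0∞)) '' S)

/-- `eSup S` : supremum of a set of times, in `ℝ≥0∞`. -/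
noncomputable def eSup (S : Set ℝ≥0) : ℝ≥0∞ := sSup ((fun x : ℝ≥0 => (x : ℝ≥0∞)) '' S)

/-- `inf_{[a,s]} f`, where the left endpoint `a` may be infinite. -/
noncomputable def infBetween (f : ℝ≥0 → ℝ) (a : ℝ≥0∞) (s : ℝ≥0) : ℝ :=
  sInf (f '' {u : ℝ≥0 | a ≤ (u : ℝ≥0∞) ∧ u ≤ s})

/-- `sup_{[a,s]} f`, where the left endpoint `a` may be infinite. -/
noncomputable def supBetween (f : ℝ≥0 → ℝ) (a : ℝ≥0∞) (s : ℝ≥0) : ℝ :=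
  sSup (f '' {u : ℝ≥0 | a ≤ (u : ℝ≥0∞) ∧ u ≤ s})

/-- `θ_{n+1} = inf {s > τ_n : f s − h = inf_{[τ_n,s]} f}`. -/
noncomputable def thetaNext (h : ℝ) (f : ℝ≥0 → ℝ) (τ : ℝ≥0∞) : ℝ≥0∞ :=
  eInf {s : ℝ≥0 | τ < (s : ℝ≥0∞) ∧ f s - h = infBetween f τ s}

/-- `τ_{n+1} = inf {s > θ_{n+1} : sup_{[θ_{n+1},s]} f = f s + h}`. -/
noncomputable def tauNext (h : ℝ) (f : ℝ≥0 → ℝ) (τ : ℝ≥0∞) : ℝ≥0∞ :=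
  eInf {s : ℝ≥0 | thetaNext h f τ < (s : ℝ≥0∞) ∧
    supBetween f (thetaNext h f τ) s = f s + h}

/-- The sequence `(τ_n)` of completion times of the sub-excursions of height `h`. -/
noncomputable def tauSeq (h : ℝ) (f : ℝ≥0 → ℝ) : ℕ → ℝ≥0∞
  | 0 => 0
  | n + 1 => tauNext h f (tauSeq h f n)

/-- `σ_{n+1} = sup {s ∈ [τ_n, τ_{n+1}] : f s = inf_{[τ_n,s]} f}` (and `σ₀ = 0`). -/
noncomputable def sigmaSeq (h : ℝ) (f : ℝ≥0 → ℝ) : ℕ → ℝ≥0∞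
  | 0 => 0
  | n + 1 => eSup {s : ℝ≥0 | tauSeq h f n ≤ (s : ℝ≥0∞) ∧ (s : ℝ≥0∞) ≤ tauSeq h f (n + 1) ∧
      f s = infBetween f (tauSeq h f n) s}

/-- The returning times of a path `Λ` to level `0` after visiting level `h`:
`t₀ = 0`, `T_{n+1} = inf {u > t_n : Λ u = h}`, `t_{n+1} = inf {u > T_{n+1} : Λ u = 0}`. -/
noncomputable def retSeq (h : ℝ) (Λ : ℝ≥0 → ℝ) : ℕ → ℝ≥0∞
  | 0 => 0
  | n + 1 =>
      eInf {u : ℝ≥0 |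
        eInf {v : ℝ≥0 | retSeq h Λ n < (v : ℝ≥0∞) ∧ Λ v = h} < (u : ℝ≥0∞) ∧ Λ u = 0}

/-- The exit times of `Λ` at level `0`: `s_{n+1} = sup {u ∈ [t_n, t_{n+1}) : Λ u = 0}`. -/
noncomputable def exitSeq (h : ℝ) (Λ : ℝ≥0 → ℝ) : ℕ → ℝ≥0∞
  | 0 => 0
  | n + 1 => eSup {u : ℝ≥0 | retSeq h Λ n ≤ (u : ℝ≥0∞) ∧ (u : ℝ≥0∞) < retSeq h Λ (n + 1) ∧
      Λ u = 0}

lemma evar_Icc_of_monotoneOn {f : ℝ≥0 → ℝ} {a b : ℝ≥0} (hab : a ≤ b)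
    (hf : MonotoneOn f (Icc a b)) :
    eVariationOn f (Icc a b) = ENNReal.ofReal (f b - f a) := by
  apply le_antisymm
  · have := hf.eVariationOn_le (left_mem_Icc.2 hab) (right_mem_Icc.2 hab)
    simpa [Set.inter_self] using this
  · have h2 := eVariationOn.edist_le f (left_mem_Icc.2 hab) (right_mem_Icc.2 hab)
    rwa [edist_dist, Real.dist_eq, abs_sub_comm,
      abs_of_nonneg (sub_nonneg.2 (hf (left_mem_Icc.2 hab) (right_mem_Icc.2 hab) hab))] at h2

lemma evar_neg (f : ℝ≥0 → ℝ) (s : Set ℝ≥0) :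
    eVariationOn (fun x => -(f x)) s = eVariationOn f s := by
  simp only [eVariationOn, edist_neg_neg]

lemma evar_Icc_of_antitoneOn {f : ℝ≥0 → ℝ} {a b : ℝ≥0} (hab : a ≤ b)
    (hf : AntitoneOn f (Icc a b)) :
    eVariationOn f (Icc a b) = ENNReal.ofReal (f a - f b) := by
  have hm : MonotoneOn (fun x => -(f x)) (Icc a b) := fun x hx y hy hxy =>
    neg_le_neg (hf hx hy hxy)
  rw [← evar_neg f, evar_Icc_of_monotoneOn hab hm]
  congr 1; ring

lemma evar_Icc_add (f : ℝ≥0 → ℝ) {a b c : ℝ≥0} (hab : a ≤ b) (hbc : b ≤ c) :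
    eVariationOn f (Icc a b) + eVariationOn f (Icc b c) = eVariationOn f (Icc a c) := by
  have h := eVariationOn.Icc_add_Icc f (s := Icc a c) hab hbc ⟨hab, hbc⟩
  rw [Set.inter_eq_self_of_subset_right (Icc_subset_Icc le_rfl hbc),
    Set.inter_eq_self_of_subset_right (Icc_subset_Icc hab le_rfl),
    Set.inter_self] at h
  exact h


lemma eInf_le' {S : Set ℝ≥0} {u : ℝ≥0} (hu : u ∈ S) : eInf S ≤ u := sInf_le ⟨u, hu, rfl⟩

lemma le_eInf' {S : Set ℝ≥0} {c : ℝ≥0∞} (h : ∀ u ∈ S, c ≤ (u : ℝ≥0∞)) : c ≤ eInf S :=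
  le_sInf (by rintro _ ⟨u, hu, rfl⟩; exact h u hu)

lemma le_eSup' {S : Set ℝ≥0} {u : ℝ≥0} (hu : u ∈ S) : (u : ℝ≥0∞) ≤ eSup S :=
  le_sSup ⟨u, hu, rfl⟩

lemma eSup_le' {S : Set ℝ≥0} {c : ℝ≥0∞} (h : ∀ u ∈ S, (u : ℝ≥0∞) ≤ c) : eSup S ≤ c :=
  sSup_le (by rintro _ ⟨u, hu, rfl⟩; exact h u hu)

lemma eInf_nonempty {S : Set ℝ≥0} {t : ℝ≥0} (h : eInf S = (t : ℝ≥0∞)) : S.Nonempty := by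
  by_contra hn
  rw [not_nonempty_iff_eq_empty] at hn
  rw [eInf, hn, image_empty, sInf_empty] at h
  exact (ENNReal.top_ne_coe h).elim

lemma eInf_eq_sInf {S : Set ℝ≥0} {t : ℝ≥0} (h : eInf S = (t : ℝ≥0∞)) : sInf S = t := by
  have hne := eInf_nonempty h
  have hcoe : (↑(sInf S) : ℝ≥0∞) = eInf S := by
    rw [ENNReal.coe_sInf hne, eInf, sInf_image]
  exact_mod_cast hcoe.trans h

lemma eInf_closed_mem {S C : Set ℝ≥0} (hC : IsClosed C) (hSC : S ⊆ C)
    {t : ℝ≥0} (h : eInf S = (t : ℝ≥0∞)) : t ∈ C := by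
  have hne := eInf_nonempty h
  have := csInf_mem_closure hne (OrderBot.bddBelow S)
  rw [eInf_eq_sInf h] at this
  exact hC.closure_subset_iff.2 hSC this

lemma eSup_eq_sSup {S : Set ℝ≥0} (hne : S.Nonempty) (hb : BddAbove S)
    {t : ℝ≥0} (h : eSup S = (t : ℝ≥0∞)) : sSup S = t := by
  have hcoe : (↑(sSup S) : ℝ≥0∞) = eSup S := by
    rw [ENNReal.coe_sSup hb, eSup, sSup_image]
  exact_mod_cast hcoe.trans h

lemma eSup_closed_mem {S C : Set ℝ≥0} (hC : IsClosed C) (hSC : S ⊆ C)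
    (hne : S.Nonempty) (hb : BddAbove S) {t : ℝ≥0} (h : eSup S = (t : ℝ≥0∞)) : t ∈ C := by
  have := csSup_mem_closure hne hb
  rw [eSup_eq_sSup hne hb h] at this
  exact hC.closure_subset_iff.2 hSC this

/-- **Total variation of the `h`-cut up to `t_n`**: if the `n`-th returning time `t_n` of
`Λ = Λ_{0,h}(f)` to `0` is finite (the times `t_k, s_k` being given as finite times whose
coercions equal the returning/exit times), then
`TV(f_h, [0,t_n]) = Σ_{k=1}^n (Y_k + X_k)` with `X_k = f_h(t_k) − f_h(s_k)` and
`Y_k = f_h(t_{k−1}) − f_h(s_k)`, each summand being non-negative. -/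
theorem total_variation_of_h_cut
    (h : ℝ) (hh : 0 < h) (f c0 ch : ℝ≥0 → ℝ) (hf : Continuous f) (hf0 : f 0 = 0)
    (hp : SkorohodPair h f c0 ch)
    (Λ : ℝ≥0 → ℝ) (hΛ : ∀ u, Λ u = f u + ch u + c0 u)
    (n : ℕ) (hn : 1 ≤ n) (t s : ℕ → ℝ≥0)
    (ht : ∀ k ≤ n, ((t k : ℝ≥0∞)) = retSeq h Λ k)
    (hs : ∀ k, 1 ≤ k → k ≤ n → ((s k : ℝ≥0∞)) = exitSeq h Λ k) :
    eVariationOn (fun u => f u - Λ u) (Set.Icc 0 (t n)) =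
      ENNReal.ofReal (∑ k ∈ Finset.range n,
        (((f (t k) - Λ (t k)) - (f (s (k + 1)) - Λ (s (k + 1)))) +
          ((f (t (k + 1)) - Λ (t (k + 1))) - (f (s (k + 1)) - Λ (s (k + 1)))))) ∧
    ∀ k < n, 0 ≤ (f (t k) - Λ (t k)) - (f (s (k + 1)) - Λ (s (k + 1))) ∧
      0 ≤ (f (t (k + 1)) - Λ (t (k + 1))) - (f (s (k + 1)) - Λ (s (k + 1))) := by
  -- Basic facts
  have hΛc : Continuous Λ := by
    have hfe : Λ = fun u => f u + ch u + c0 u := funext hΛ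
    rw [hfe]; exact (hf.add hp.conth).add hp.cont0
  have hΛ0 : Λ 0 = 0 := by
    rw [hΛ 0, hf0, hp.inith, hp.init0]; ring
  set g : ℝ≥0 → ℝ := fun u => f u - Λ u with hgdef
  have hgval : ∀ u, g u = -(ch u + c0 u) := by
    intro u; simp only [hgdef]; rw [hΛ u]; ring
  have hclosed0 : IsClosed {u : ℝ≥0 | Λ u = 0} := isClosed_eq hΛc continuous_const
  have hclosedh : IsClosed {u : ℝ≥0 | Λ u = h} := isClosed_eq hΛc continuous_const
  -- Λ vanishes at the returning times
  have hΛt : ∀ k, k ≤ n → Λ (t k) = 0 := by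
    intro k hk
    match k with
    | 0 =>
      have h0 : ((t 0 : ℝ≥0∞)) = 0 := by rw [ht 0 (Nat.zero_le n)]; rfl
      have h0' : t 0 = 0 := by exact_mod_cast h0
      rw [h0']; exact hΛ0
    | (j+1) =>
      have h1 : eInf {u : ℝ≥0 |
          eInf {v : ℝ≥0 | retSeq h Λ j < (v : ℝ≥0∞) ∧ Λ v = h} < (u : ℝ≥0∞) ∧ Λ u = 0}
          = ((t (j+1) : ℝ≥0∞)) := (ht (j+1) hk).symm
      exact eInf_closed_mem hclosed0 (fun u hu => hu.2) h1
  -- the key monotonicity facts on each piece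
  have key : ∀ k, k < n →
      t k ≤ s (k+1) ∧ s (k+1) ≤ t (k+1) ∧
      AntitoneOn g (Icc (t k) (s (k+1))) ∧ MonotoneOn g (Icc (s (k+1)) (t (k+1))) := by
    intro k hkn
    have hk1n : k + 1 ≤ n := hkn
    have hkn' : k ≤ n := le_of_lt hkn
    have htk : ((t k : ℝ≥0∞)) = retSeq h Λ k := ht k hkn'
    have htk1 : ((t (k+1) : ℝ≥0∞)) = retSeq h Λ (k+1) := ht (k+1) hk1n
    have hsk : ((s (k+1) : ℝ≥0∞)) = exitSeq h Λ (k+1) := hs (k+1) (Nat.le_add_left 1 k) hk1n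
    set T : ℝ≥0∞ := eInf {v : ℝ≥0 | retSeq h Λ k < (v : ℝ≥0∞) ∧ Λ v = h} with hTdef
    have hret1 : retSeq h Λ (k+1) = eInf {u : ℝ≥0 | T < (u : ℝ≥0∞) ∧ Λ u = 0} := by
      rw [hTdef]; rfl
    have hΛtk : Λ (t k) = 0 := hΛt k hkn'
    have hΛtk1 : Λ (t (k+1)) = 0 := hΛt (k+1) hk1n
    have hTle : T ≤ (t (k+1) : ℝ≥0∞) := by
      rw [htk1, hret1]; exact le_eInf' (fun u hu => hu.1.le)
    have hM1 : ∀ u : ℝ≥0, T < (u : ℝ≥0∞) → (u : ℝ≥0∞) < ((t (k+1) : ℝ≥0∞)) → Λ u ≠ 0 := by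
      intro u h1 h2 h3
      have hle : ((t (k+1) : ℝ≥0∞)) ≤ (u : ℝ≥0∞) := by
        rw [htk1, hret1]; exact eInf_le' ⟨h1, h3⟩
      exact absurd hle (not_le.2 h2)
    obtain ⟨Tr, hTr⟩ : ∃ Tr : ℝ≥0, T = (Tr : ℝ≥0∞) :=
      ⟨T.toNNReal, (ENNReal.coe_toNNReal (hTle.trans_lt ENNReal.coe_lt_top).ne).symm⟩
    have hΛTr : Λ Tr = h :=
      eInf_closed_mem hclosedh (fun v hv => hv.2) (hTdef.symm.trans hTr)
    have htkT : ((t k : ℝ≥0∞)) ≤ T := by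
      rw [htk, hTdef]; exact le_eInf' (fun v hv => hv.1.le)
    have hM2 : ∀ u : ℝ≥0, ((t k : ℝ≥0∞)) < (u : ℝ≥0∞) → (u : ℝ≥0∞) < T → Λ u ≠ h := by
      intro u h1 h2 h3
      have hle : T ≤ (u : ℝ≥0∞) := by
        rw [hTdef]; exact eInf_le' ⟨htk ▸ h1, h3⟩
      exact absurd hle (not_le.2 h2)
    have htkTr : t k < Tr := by
      have hle : t k ≤ Tr := by
        rw [hTr] at htkT; exact_mod_cast htkT
      rcases lt_or_eq_of_le hle with hlt | heq
      · exact hlt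
      · exfalso; rw [heq, hΛTr] at hΛtk; exact hh.ne' hΛtk
    have hTrtk1 : Tr < t (k+1) := by
      have hle : Tr ≤ t (k+1) := by
        rw [hTr] at hTle; exact_mod_cast hTle
      rcases lt_or_eq_of_le hle with hlt | heq
      · exact hlt
      · exfalso; rw [heq] at hΛTr; rw [hΛTr] at hΛtk1; exact hh.ne' hΛtk1
    have htktk1 : t k < t (k+1) := htkTr.trans hTrtk1
    -- the exit set
    set E : Set ℝ≥0 := {u : ℝ≥0 | retSeq h Λ k ≤ (u : ℝ≥0∞) ∧ (u : ℝ≥0∞) < retSeq h Λ (k+1) ∧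
      Λ u = 0} with hEdef
    have hexit : exitSeq h Λ (k+1) = eSup E := by rw [hEdef]; rfl
    have htkE : t k ∈ E := by
      refine ⟨htk.symm.le, ?_, hΛtk⟩
      rw [← htk1]; exact_mod_cast htktk1
    have hEb : BddAbove E := by
      refine ⟨t (k+1), fun u hu => ?_⟩
      have := hu.2.1; rw [← htk1] at this
      exact le_of_lt (by exact_mod_cast this)
    have hEsup : eSup E = ((s (k+1) : ℝ≥0∞)) := by rw [← hexit, hsk]
    have hΛsk : Λ (s (k+1)) = 0 :=
      eSup_closed_mem hclosed0 (fun u hu => hu.2.2) ⟨t k, htkE⟩ hEb hEsup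
    have hM3 : ∀ u ∈ E, u ≤ s (k+1) := by
      intro u hu
      have := le_eSup' hu
      rw [hEsup] at this; exact_mod_cast this
    have htks : t k ≤ s (k+1) := hM3 _ htkE
    have hskT : ((s (k+1) : ℝ≥0∞)) ≤ T := by
      rw [← hEsup]
      refine eSup_le' (fun u hu => ?_)
      by_contra hc
      push_neg at hc
      have h2 := hu.2.1; rw [← htk1] at h2
      exact hM1 u hc (by rw [htk1]; exact hu.2.1) hu.2.2
    have hskTr : s (k+1) < Tr := by
      have hle : s (k+1) ≤ Tr := by rw [hTr] at hskT; exact_mod_cast hskT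
      rcases lt_or_eq_of_le hle with hlt | heq
      · exact hlt
      · exfalso; rw [heq, hΛTr] at hΛsk; exact hh.ne' hΛsk
    have hsktk1 : s (k+1) ≤ t (k+1) := (hskTr.trans hTrtk1).le
    -- Λ avoids h on [t k, s (k+1)]
    have hA1 : ∀ u ∈ Icc (t k) (s (k+1)), Λ u ≠ h := by
      rintro u ⟨h1, h2⟩
      rcases eq_or_lt_of_le h1 with heq | hlt
      · rw [← heq, hΛtk]; exact hh.ne
      · refine hM2 u (by exact_mod_cast hlt) ?_
        rw [hTr]
        exact_mod_cast lt_of_le_of_lt h2 hskTr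
    -- ch is constant on [t k, s (k+1)]
    have hch : ∀ u ∈ Icc (t k) (s (k+1)), ch u = ch (t k) := by
      rintro u ⟨h1, h2⟩
      exact hp.flath (t k) u h1 (fun v hv => by
        rw [← hΛ v]; exact hA1 v ⟨hv.1, hv.2.trans h2⟩)
    have hanti : AntitoneOn g (Icc (t k) (s (k+1))) := by
      intro x hx y hy hxy
      rw [hgval, hgval]
      have hcx := hch x hx
      have hcy := hch y hy
      have hmono := hp.mono0 hxy
      linarith
    -- Λ avoids 0 on (s (k+1), t (k+1))
    have hA2 : ∀ u : ℝ≥0, s (k+1) < u → u < t (k+1) → Λ u ≠ 0 := by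
      intro u h1 h2 h3
      have huE : u ∈ E := by
        refine ⟨?_, ?_, h3⟩
        · rw [← htk]; exact_mod_cast (htks.trans h1.le)
        · rw [← htk1]; exact_mod_cast h2
      exact absurd (hM3 u huE) (not_le.2 h1)
    -- c0 is constant on [s (k+1), t (k+1)]
    have hc0 : ∀ u ∈ Icc (s (k+1)) (t (k+1)), c0 u = c0 (s (k+1)) := by
      rcases eq_or_lt_of_le hsktk1 with heq | hlt
      · rintro u ⟨h1, h2⟩
        have : u = s (k+1) := le_antisymm (heq ▸ h2) h1
        rw [this]
      · obtain ⟨m, hm1, hm2⟩ := exists_between hlt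
        have hoo : ∀ u ∈ Ioo (s (k+1)) (t (k+1)), c0 u = c0 m := by
          intro u hu
          rcases le_total u m with hum | hmu
          · exact (hp.flat0 u m hum (fun v hv => by
              rw [← hΛ v]
              exact hA2 v (hu.1.trans_le hv.1) (lt_of_le_of_lt hv.2 hm2))).symm
          · exact hp.flat0 m u hmu (fun v hv => by
              rw [← hΛ v]
              exact hA2 v (hm1.trans_le hv.1) (hv.2.trans_lt hu.2))
        have hs0 : c0 (s (k+1)) = c0 m := by
          have h1 : Filter.Tendsto c0 (nhdsWithin (s (k+1)) (Ioi (s (k+1)))) (nhds (c0 (s (k+1)))) :=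
            (hp.cont0.tendsto _).mono_left nhdsWithin_le_nhds
          have h2 : Filter.Tendsto c0 (nhdsWithin (s (k+1)) (Ioi (s (k+1)))) (nhds (c0 m)) := by
            refine Filter.Tendsto.congr' ?_ tendsto_const_nhds
            filter_upwards [Ioo_mem_nhdsGT hlt] with u hu
            exact (hoo u hu).symm
          exact tendsto_nhds_unique h1 h2
        have ht0 : c0 (t (k+1)) = c0 m := by
          have hne : Filter.NeBot (nhdsWithin (t (k+1)) (Iio (t (k+1)))) :=
            nhdsWithin_Iio_self_neBot' ⟨s (k+1), hlt⟩
          have h1 : Filter.Tendsto c0 (nhdsWithin (t (k+1)) (Iio (t (k+1)))) (nhds (c0 (t (k+1)))) :=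
            (hp.cont0.tendsto _).mono_left nhdsWithin_le_nhds
          have h2 : Filter.Tendsto c0 (nhdsWithin (t (k+1)) (Iio (t (k+1)))) (nhds (c0 m)) := by
            refine Filter.Tendsto.congr' ?_ tendsto_const_nhds
            filter_upwards [Ioo_mem_nhdsLT hlt] with u hu
            exact (hoo u hu).symm
          exact tendsto_nhds_unique h1 h2
        rintro u ⟨h1, h2⟩
        have hu1 := hp.mono0 h1
        have hu2 := hp.mono0 h2
        linarith
    have hmono : MonotoneOn g (Icc (s (k+1)) (t (k+1))) := by
      intro x hx y hy hxy
      rw [hgval, hgval]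
      have hcx := hc0 x hx
      have hcy := hc0 y hy
      have hantih := hp.antih hxy
      linarith
    exact ⟨htks, hsktk1, hanti, hmono⟩
  -- nonnegativity of the summands
  have nonneg : ∀ k < n, 0 ≤ (f (t k) - Λ (t k)) - (f (s (k + 1)) - Λ (s (k + 1))) ∧
      0 ≤ (f (t (k + 1)) - Λ (t (k + 1))) - (f (s (k + 1)) - Λ (s (k + 1))) := by
    intro k hk
    obtain ⟨h1, h2, ha, hm⟩ := key k hk
    constructor
    · have := ha (left_mem_Icc.2 h1) (right_mem_Icc.2 h1) h1
      simp only [hgdef] at this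
      linarith
    · have := hm (left_mem_Icc.2 h2) (right_mem_Icc.2 h2) h2
      simp only [hgdef] at this
      linarith
  -- the chain t 0 ≤ t m
  have tmono : ∀ k < n, t k ≤ t (k+1) := fun k hk => ((key k hk).1.trans (key k hk).2.1)
  have tchain : ∀ m, m ≤ n → t 0 ≤ t m := by
    intro m
    induction m with
    | zero => intro _; exact le_rfl
    | succ m ih => intro hm; exact (ih (Nat.le_of_succ_le hm)).trans (tmono m hm)
  -- main computation by induction
  have main : ∀ m, m ≤ n → eVariationOn g (Icc (t 0) (t m)) =
      ENNReal.ofReal (∑ k ∈ Finset.range m,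
        (((f (t k) - Λ (t k)) - (f (s (k + 1)) - Λ (s (k + 1)))) +
          ((f (t (k + 1)) - Λ (t (k + 1))) - (f (s (k + 1)) - Λ (s (k + 1)))))) := by
    intro m
    induction m with
    | zero =>
      intro _
      rw [Icc_self]
      rw [eVariationOn.subsingleton g Set.subsingleton_singleton]
      simp
    | succ m ih =>
      intro hm
      have hmn : m < n := hm
      obtain ⟨h1, h2, ha, hmo⟩ := key m hmn
      have ht0m : t 0 ≤ t m := tchain m hmn.le
      have hY : 0 ≤ g (t m) - g (s (m+1)) :=
        sub_nonneg.2 (ha (left_mem_Icc.2 h1) (right_mem_Icc.2 h1) h1)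
      have hX : 0 ≤ g (t (m+1)) - g (s (m+1)) :=
        sub_nonneg.2 (hmo (left_mem_Icc.2 h2) (right_mem_Icc.2 h2) h2)
      have hS : 0 ≤ ∑ k ∈ Finset.range m,
          (((f (t k) - Λ (t k)) - (f (s (k + 1)) - Λ (s (k + 1)))) +
            ((f (t (k + 1)) - Λ (t (k + 1))) - (f (s (k + 1)) - Λ (s (k + 1))))) := by
        refine Finset.sum_nonneg (fun k hk => ?_)
        have hkn : k < n := lt_of_lt_of_le (Finset.mem_range.1 hk) hmn.le
        obtain ⟨hY', hX'⟩ := nonneg k hkn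
        linarith
      have hYX : 0 ≤ ((f (t m) - Λ (t m)) - (f (s (m + 1)) - Λ (s (m + 1)))) +
          ((f (t (m + 1)) - Λ (t (m + 1))) - (f (s (m + 1)) - Λ (s (m + 1)))) := by
        obtain ⟨hY', hX'⟩ := nonneg m hmn
        linarith
      rw [← evar_Icc_add g ht0m (h1.trans h2), ← evar_Icc_add g h1 h2,
        ih hmn.le, evar_Icc_of_antitoneOn h1 ha, evar_Icc_of_monotoneOn h2 hmo,
        Finset.sum_range_succ, ENNReal.ofReal_add hS hYX,
        ← ENNReal.ofReal_add hY hX]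
  have ht00 : t 0 = 0 := by
    have h0 : ((t 0 : ℝ≥0∞)) = retSeq h Λ 0 := ht 0 (Nat.zero_le n)
    have : ((t 0 : ℝ≥0∞)) = (0 : ℝ≥0∞) := h0
    exact_mod_cast this
  refine ⟨?_, nonneg⟩
  rw [← ht00]
  exact main n le_rfl
end

section
/- Let h > 0 and let f : ℝ≥0 → ℝ≥0 be continuous with f(0) = 0, and suppose f is non-increasing on [t, ∞) for some t ≥ 0. Then the upper compensator of the two-sided Skorohod reflection of f on [0,h] is constant on [t, ∞): cʰ(f)(s) = cʰ(f)(t) for all s ≥ t. -/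
open Set
open scoped NNReal ENNReal Topology

/-- **No downward push once `f` stops increasing**: if the non-negative continuous `f`
(with `f 0 = 0`) is non-increasing on `[t, ∞)`, then the upper compensator `cʰ` of the
two-sided Skorohod reflection of `f` on `[0,h]` is constant on `[t, ∞)`. -/
theorem upper_compensator_constant_of_eventually_nonincreasing
    (h : ℝ) (hh : 0 < h) (f : ℝ≥0 → ℝ) (hf : Continuous f)
    (hpos : ∀ u, 0 ≤ f u) (hf0 : f 0 = 0)
    (t : ℝ≥0) (hmono : ∀ a b : ℝ≥0, t ≤ a → a ≤ b → f b ≤ f a)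
    (c0 ch : ℝ≥0 → ℝ) (hp : SkorohodPair h f c0 ch) :
    ∀ s, t ≤ s → ch s = ch t := by

  intro s hts
  by_contra hne
  have hlt : ch s < ch t := lt_of_le_of_ne (hp.antih hts) hne
  set Λ : ℝ≥0 → ℝ := fun u => f u + ch u + c0 u with hΛdef
  have hΛcont : Continuous Λ := (hf.add hp.conth).add hp.cont0
  set S : Set ℝ≥0 := {u | u ∈ Icc t s ∧ ch u = ch t} with hS
  have htS : t ∈ S := ⟨⟨le_refl t, hts⟩, rfl⟩
  have hSbdd : BddAbove S := ⟨s, fun u hu => hu.1.2⟩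
  have hSclosed : IsClosed S :=
    isClosed_Icc.inter (isClosed_eq hp.conth continuous_const)
  set r := sSup S with hr
  have hrS : r ∈ S := hSclosed.csSup_mem ⟨t, htS⟩ hSbdd
  obtain ⟨⟨htr, hrs⟩, hchr⟩ := hrS
  have hlt_rs : r < s := by
    rcases lt_or_eq_of_le hrs with h' | h'
    · exact h'
    · exact absurd (h' ▸ hchr) (ne_of_lt hlt)
  have key : ∀ u, r < u → u ≤ s → ch u < ch t := by
    intro u hru hus
    rcases lt_or_eq_of_le (hp.antih (le_trans htr hru.le)) with h' | h'
    · exact h'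
    · exact absurd (le_csSup hSbdd ⟨⟨le_trans htr hru.le, hus⟩, h'⟩) (not_le.mpr hru)
  have hΛr : Λ r = h := by
    by_contra hΛne
    have hΛlt : Λ r < h := lt_of_le_of_ne (hp.mem_Icc r).2 hΛne
    have hU : {u | Λ u < h} ∈ 𝓝 r := (isOpen_lt hΛcont continuous_const).mem_nhds hΛlt
    obtain ⟨u', hru', hsub⟩ := exists_Ico_subset_of_mem_nhds hU ⟨r + 1, lt_add_one r⟩
    set v := min s ((r + u') / 2) with hv
    have hrv : r < v := lt_min hlt_rs (left_lt_add_div_two.mpr hru')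
    have hvs : v ≤ s := min_le_left _ _
    have hne' : ∀ u ∈ Icc r v, f u + ch u + c0 u ≠ h := by
      intro u hu
      exact ne_of_lt (hsub ⟨hu.1, lt_of_le_of_lt (le_trans hu.2 (min_le_right _ _))
        (add_div_two_lt_right.mpr hru')⟩)
    have h1 := hp.flath r v hrv.le hne'
    exact absurd (h1.trans hchr) (ne_of_lt (key v hrv hvs))
  have hΛpos : (0 : ℝ) < Λ r := hΛr ▸ hh
  have hU0 : {u | 0 < Λ u} ∈ 𝓝 r := (isOpen_lt continuous_const hΛcont).mem_nhds hΛpos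
  obtain ⟨u0, hru0, hsub0⟩ := exists_Ico_subset_of_mem_nhds hU0 ⟨r + 1, lt_add_one r⟩
  set m := min s ((r + u0) / 2) with hm
  have hrm : r < m := lt_min hlt_rs (left_lt_add_div_two.mpr hru0)
  have hms : m ≤ s := min_le_left _ _
  have hc0 : ∀ u ∈ Icc r m, c0 u = c0 r := by
    intro u hu
    refine hp.flat0 r u hu.1 ?_
    intro w hw
    exact (hsub0 ⟨hw.1, lt_of_le_of_lt (le_trans hw.2 (le_trans hu.2 (min_le_right _ _)))
      (add_div_two_lt_right.mpr hru0)⟩).ne'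
  have hΛlt2 : ∀ u, r < u → u ≤ m → Λ u < h := by
    intro u hru hum
    have h1 : f u ≤ f r := hmono r u htr hru.le
    have h2 : ch u < ch r := by rw [hchr]; exact key u hru (hum.trans hms)
    have h3 : c0 u = c0 r := hc0 u ⟨hru.le, hum⟩
    calc Λ u = f u + ch u + c0 r := by simp only [hΛdef, h3]
    _ < f r + ch r + c0 r := by linarith
    _ = h := hΛr
  have hconst : ∀ v, r < v → v ≤ m → ch m = ch v := by
    intro v hrv hvm
    exact hp.flath v m hvm
      (fun u hu => ne_of_lt (hΛlt2 u (lt_of_lt_of_le hrv hu.1) hu.2))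
  have hmlt : ch m < ch r := by rw [hchr]; exact key m hrm hms
  have hU2 : {u | ch m < ch u} ∈ 𝓝 r := (isOpen_lt continuous_const hp.conth).mem_nhds hmlt
  obtain ⟨u2, hru2, hsub2⟩ := exists_Ico_subset_of_mem_nhds hU2 ⟨r + 1, lt_add_one r⟩
  set v := min m ((r + u2) / 2) with hv2
  have hrv : r < v := lt_min hrm (left_lt_add_div_two.mpr hru2)
  have hvm : v ≤ m := min_le_left _ _
  have h1 : ch m = ch v := hconst v hrv hvm
  have h2 : ch m < ch v := hsub2 ⟨hrv.le, lt_of_le_of_lt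
    (le_trans (min_le_right _ _) (le_refl _)) (add_div_two_lt_right.mpr hru2)⟩
  exact absurd h1 (ne_of_lt h2)
end

section
/- Let f : ℝ≥0 → ℝ≥0 be continuous with f(0) = 0, and for t ≥ 0 define f^{(t)}(s) = f(s) for s ≤ t and f^{(t)}(s) = max(f(t) − (s − t), 0) for s > t. Then the real tree T_{f^{(t)}} coded by f^{(t)} is isometric, via a root-preserving isometry, to the subtree T_f^{(t)} := {p_f(s) : s ≤ t} of the real tree T_f coded by f (with the induced metric). -/
open Set
open scoped NNReal

/-- The path `f^{(t)}`: it follows `f` up to time `t` and then decreases at unit speed to `0`. -/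
noncomputable def stopCut (f : ℝ≥0 → ℝ) (t : ℝ≥0) (s : ℝ≥0) : ℝ :=
  if s ≤ t then f s else max (f t - ((s : ℝ) - (t : ℝ))) 0

lemma aux_bddBelow {f : ℝ≥0 → ℝ} (hpos : ∀ u, 0 ≤ f u) (s : Set ℝ≥0) :
    BddBelow (f '' s) :=
  ⟨0, by rintro y ⟨x, -, rfl⟩; exact hpos x⟩

lemma aux_inf_le {f : ℝ≥0 → ℝ} (hpos : ∀ u, 0 ≤ f u) {a b x : ℝ≥0}
    (h1 : a ≤ x) (h2 : x ≤ b) : sInf (f '' Icc a b) ≤ f x :=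
  csInf_le (aux_bddBelow hpos _) ⟨x, ⟨h1, h2⟩, rfl⟩

lemma aux_le_inf {f : ℝ≥0 → ℝ} {a b : ℝ≥0} {c : ℝ} (hab : a ≤ b)
    (h : ∀ x, a ≤ x → x ≤ b → c ≤ f x) : c ≤ sInf (f '' Icc a b) :=
  le_csInf ((nonempty_Icc.2 hab).image f) (by rintro y ⟨x, hx, rfl⟩; exact h x hx.1 hx.2)

lemma aux_inf_eq {f : ℝ≥0 → ℝ} (hpos : ∀ u, 0 ≤ f u) {a b x : ℝ≥0}
    (h1 : a ≤ x) (h2 : x ≤ b)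
    (h : ∀ y, a ≤ y → y ≤ b → f x ≤ f y) : sInf (f '' Icc a b) = f x :=
  le_antisymm (aux_inf_le hpos h1 h2) (aux_le_inf (h1.trans h2) h)

lemma aux_inf_split {f : ℝ≥0 → ℝ} (hpos : ∀ u, 0 ≤ f u) {a b c : ℝ≥0}
    (hab : a ≤ b) (hbc : b ≤ c) :
    sInf (f '' Icc a c) = min (sInf (f '' Icc a b)) (sInf (f '' Icc b c)) := by
  rw [← Icc_union_Icc_eq_Icc hab hbc, image_union,
    csInf_union (aux_bddBelow hpos _) ((nonempty_Icc.2 hab).image f)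
      (aux_bddBelow hpos _) ((nonempty_Icc.2 hbc).image f)]

lemma aux_treeDist_comm (f : ℝ≥0 → ℝ) (s u : ℝ≥0) :
    treeDist f s u = treeDist f u s := by
  unfold treeDist; rw [min_comm, max_comm]; ring


/-- **The tree coded by `f^{(t)}` is the tree explored up to time `t`**: there is a
root-preserving isometry from the real tree `T_{f^{(t)}}` onto the subtree
`T_f^{(t)} = {p_f s : s ≤ t}` of `T_f`.  This is expressed at the level of times: `φ`
maps times to times `≤ t`, is an isometry from `d_{f^{(t)}}` to `d_f`, preserves the root,
and is surjective onto the classes of times `≤ t`. -/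
theorem tree_of_stopped_path_isometric_to_explored_subtree
    (f : ℝ≥0 → ℝ) (hf : Continuous f) (hpos : ∀ u, 0 ≤ f u) (hf0 : f 0 = 0) (t : ℝ≥0) :
    ∃ φ : ℝ≥0 → ℝ≥0,
      (∀ s, φ s ≤ t) ∧
      (∀ s u, treeDist f (φ s) (φ u) = treeDist (stopCut f t) s u) ∧
      φ 0 = 0 ∧
      (∀ u, u ≤ t → ∃ s, treeDist f (φ s) u = 0) := by
  classical
  set g := stopCut f t with hgdef
  have hg_of_le : ∀ s : ℝ≥0, s ≤ t → g s = f s := fun s hs => if_pos hs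
  have hg_of_gt : ∀ s : ℝ≥0, t < s → g s = max (f t - ((s : ℝ) - (t : ℝ))) 0 :=
    fun s hs => if_neg (not_le.2 hs)
  have hgpos : ∀ s, 0 ≤ g s := by
    intro s
    rcases le_or_gt s t with h | h
    · rw [hg_of_le s h]; exact hpos s
    · rw [hg_of_gt s h]; exact le_max_right _ _
  have hg_le_ft : ∀ s, t < s → g s ≤ f t := by
    intro s hs
    rw [hg_of_gt s hs]
    apply max_le _ (hpos t)
    have : (t : ℝ) ≤ (s : ℝ) := NNReal.coe_le_coe.2 hs.le
    linarith
  have hg_anti : ∀ s u : ℝ≥0, t < s → s ≤ u → g u ≤ g s := by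
    intro s u hts hsu
    rw [hg_of_gt s hts, hg_of_gt u (hts.trans_le hsu)]
    have : (s : ℝ) ≤ (u : ℝ) := NNReal.coe_le_coe.2 hsu
    exact max_le_max (by linarith) le_rfl
  -- the ancestor-time map
  set S : ℝ → Set ℝ≥0 := fun a => {r | r ≤ t ∧ f r ≤ a} with hSdef
  set ρ : ℝ → ℝ≥0 := fun a => sSup (S a) with hρdef
  have hS0 : ∀ a : ℝ, 0 ≤ a → (0 : ℝ≥0) ∈ S a := fun a ha => ⟨zero_le, by rw [hf0]; exact ha⟩
  have hSbdd : ∀ a, BddAbove (S a) := fun a => ⟨t, fun r hr => hr.1⟩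
  have hSclosed : ∀ a, IsClosed (S a) := by
    intro a
    have : S a = {r : ℝ≥0 | r ≤ t} ∩ f ⁻¹' (Iic a) := rfl
    rw [this]
    exact (isClosed_le continuous_id continuous_const).inter (isClosed_Iic.preimage hf)
  have hρ_mem : ∀ a : ℝ, 0 ≤ a → ρ a ∈ S a :=
    fun a ha => (hSclosed a).csSup_mem ⟨0, hS0 a ha⟩ (hSbdd a)
  have hρ_le : ∀ a : ℝ, 0 ≤ a → ρ a ≤ t := fun a ha => (hρ_mem a ha).1
  have K2 : ∀ a : ℝ, ∀ r : ℝ≥0, ρ a < r → r ≤ t → a < f r := by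
    intro a r hr hrt
    by_contra h
    push_neg at h
    exact absurd (le_csSup (hSbdd a) ⟨hrt, h⟩) (not_le.2 hr)
  have K3 : ∀ a : ℝ, 0 ≤ a → a ≤ f t → f (ρ a) = a := by
    intro a ha hat
    rcases eq_or_lt_of_le (hρ_le a ha) with heq | hlt
    · rw [heq]; exact le_antisymm (heq ▸ (hρ_mem a ha).2) hat
    · refine le_antisymm (hρ_mem a ha).2 ?_
      by_contra hlt2
      push_neg at hlt2
      have hU : {x : ℝ≥0 | f x < a} ∈ nhds (ρ a) :=
        (isOpen_lt hf continuous_const).mem_nhds hlt2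
      have hcl : ρ a ∈ closure (Ioc (ρ a) t) := by
        rw [closure_Ioc hlt.ne]
        exact ⟨le_rfl, hlt.le⟩
      rcases mem_closure_iff_nhds.1 hcl _ hU with ⟨x, hx1, hx2⟩
      exact absurd (K2 a x hx2.1 hx2.2) (not_lt.2 hx1.le)
  have K4 : ∀ a b : ℝ, 0 ≤ a → a ≤ b → ρ a ≤ ρ b := fun a b ha hab =>
    csSup_le_csSup (hSbdd b) ⟨0, hS0 a ha⟩ (fun r hr => ⟨hr.1, hr.2.trans hab⟩)
  -- definition of φ
  set φ : ℝ≥0 → ℝ≥0 := fun s => if s ≤ t then s else ρ (g s) with hφdef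
  have hφ_le : ∀ s, φ s ≤ t := by
    intro s
    rcases le_or_gt s t with h | h
    · simp only [hφdef, if_pos h]; exact h
    · simp only [hφdef, if_neg (not_le.2 h)]
      exact hρ_le _ (hgpos s)
  have hφ_of_le : ∀ s : ℝ≥0, s ≤ t → φ s = s := fun s hs => if_pos hs
  have hφ_of_gt : ∀ s : ℝ≥0, t < s → φ s = ρ (g s) := fun s hs => if_neg (not_le.2 hs)
  -- inf over [ρ a, x] for ρ a ≤ x ≤ t equals a
  have Kinf : ∀ a : ℝ, 0 ≤ a → a ≤ f t → ∀ x : ℝ≥0, ρ a ≤ x → x ≤ t →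
      sInf (f '' Icc (ρ a) x) = a := by
    intro a ha hat x hx hxt
    refine le_antisymm ((aux_inf_le hpos le_rfl hx).trans_eq (K3 a ha hat)) ?_
    refine aux_le_inf hx ?_
    intro y hy1 hy2
    rcases eq_or_lt_of_le hy1 with rfl | hy1'
    · exact (K3 a ha hat).ge
    · exact (K2 a y hy1' (hy2.trans hxt)).le
  -- main computation for s ≤ u
  have main : ∀ s u : ℝ≥0, s ≤ u → treeDist f (φ s) (φ u) = treeDist g s u := by
    intro s u hsu
    rcases le_or_gt u t with hut | htu
    · -- both ≤ t
      have hst : s ≤ t := hsu.trans hut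
      rw [hφ_of_le s hst, hφ_of_le u hut]
      have himg : g '' Icc (min s u) (max s u) = f '' Icc (min s u) (max s u) :=
        image_congr fun x hx => hg_of_le x (hx.2.trans (max_le hst hut))
      unfold treeDist
      rw [hg_of_le s hst, hg_of_le u hut, himg]
    · set B : ℝ := g u with hBdef
      have hB0 : 0 ≤ B := hgpos u
      have hBft : B ≤ f t := hg_le_ft u htu
      have hfρB : f (ρ B) = B := K3 B hB0 hBft
      have hρBt : ρ B ≤ t := hρ_le B hB0
      have hguB : ∀ y : ℝ≥0, t ≤ y → y ≤ u → g u ≤ g y := by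
        intro y hy1 hy2
        rcases eq_or_lt_of_le hy1 with rfl | hy1'
        · rw [hg_of_le t le_rfl]; exact hBft
        · exact hg_anti y u hy1' hy2
      rcases le_or_gt s t with hst | hts
      · -- s ≤ t < u
        rw [hφ_of_le s hst, hφ_of_gt u htu]
        have himg : g '' Icc s t = f '' Icc s t :=
          image_congr fun x hx => hg_of_le x hx.2
        have hRHS : sInf (g '' Icc s u) = min (sInf (f '' Icc s t)) B := by
          rw [aux_inf_split hgpos hst (htu.le), himg,
            aux_inf_eq hgpos htu.le le_rfl hguB]
        rcases le_or_gt s (ρ B) with hsr | hrs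
        · -- s ≤ ρ B
          have hsplit : sInf (f '' Icc s t) = min (sInf (f '' Icc s (ρ B))) B := by
            rw [aux_inf_split hpos hsr hρBt, Kinf B hB0 hBft t hρBt le_rfl]
          have hXB : sInf (f '' Icc s (ρ B)) ≤ B :=
            (aux_inf_le hpos hsr le_rfl).trans_eq hfρB
          unfold treeDist
          rw [min_eq_left hsr, max_eq_right hsr, min_eq_left hsu, max_eq_right hsu,
            hg_of_le s hst, hfρB, hRHS, hsplit, min_eq_left hXB, min_eq_left hXB,
            ← hBdef]
        · -- ρ B < s ≤ t
          have hinf1 : sInf (f '' Icc (ρ B) s) = B := Kinf B hB0 hBft s hrs.le hst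
          have hinf2 : B ≤ sInf (f '' Icc s t) :=
            aux_le_inf hst (fun y hy1 hy2 => (K2 B y (hrs.trans_le hy1) hy2).le)
          unfold treeDist
          rw [min_eq_right hrs.le, max_eq_left hrs.le, min_eq_left hsu, max_eq_right hsu,
            hg_of_le s hst, hfρB, hRHS, hinf1, min_eq_right hinf2, ← hBdef]
      · -- t < s ≤ u
        set A : ℝ := g s with hAdef
        have hA0 : 0 ≤ A := hgpos s
        have hAft : A ≤ f t := hg_le_ft s hts
        have hfρA : f (ρ A) = A := K3 A hA0 hAft
        have hBA : B ≤ A := hg_anti s u hts hsu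
        have hρρ : ρ B ≤ ρ A := K4 B A hB0 hBA
        rw [hφ_of_gt s hts, hφ_of_gt u htu]
        have hinfL : sInf (f '' Icc (ρ B) (ρ A)) = B :=
          Kinf B hB0 hBft (ρ A) hρρ (hρ_le A hA0)
        have hinfR : sInf (g '' Icc s u) = B := by
          refine aux_inf_eq hgpos hsu le_rfl ?_
          intro y hy1 hy2
          exact hg_anti y u (hts.trans_le hy1) hy2
        unfold treeDist
        rw [min_comm, min_eq_left hρρ, max_comm, max_eq_right hρρ,
          min_eq_left hsu, max_eq_right hsu, hfρA, hfρB, hinfL, hinfR, ← hBdef, ← hAdef]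
  refine ⟨φ, hφ_le, ?_, ?_, ?_⟩
  · intro s u
    rcases le_total s u with h | h
    · exact main s u h
    · rw [aux_treeDist_comm, main u s h, aux_treeDist_comm]
  · exact hφ_of_le 0 zero_le
  · intro u hu
    refine ⟨u, ?_⟩
    rw [hφ_of_le u hu]
    unfold treeDist
    rw [min_self, max_self, Icc_self, image_singleton, csInf_singleton]
    ring
end
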